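/- Let V = ℕ →₀ ℂ with standard basis vectors e i (i ∈ ℕ). Suppose g : V ≃ₗ[ℂ] V is a ℂ-linear automorphism and S ⊆ ℕ is a finite set such that g (e i) = e i for every i ∉ S. Then the subspace U := span_ℂ ({e j | j ∈ S} ∪ {g (e j) | j ∈ S}) is finite-dimensional, g maps U onto U (i.e. the image of U under g equals U), and U ⊔ span_ℂ {e i | i ∉ S} = ⊤. -/

import Mathlib

/-- Every finitary automorphism `g` of `V = ℕ →₀ ℂ` (fixing all basis vectors `e i`, `i ∉ S`,
for a finite set `S`) admits a finite-dimensional `g`-invariant subspace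
`U = span ({e j | j ∈ S} ∪ {g (e j) | j ∈ S})` with `U ⊔ span {e i | i ∉ S} = ⊤`. -/
theorem stmt_0 (g : (ℕ →₀ ℂ) ≃ₗ[ℂ] (ℕ →₀ ℂ)) (S : Finset ℕ)
    (hg : ∀ i ∉ S, g (Finsupp.single i (1 : ℂ)) = Finsupp.single i (1 : ℂ))
    (U : Submodule ℂ (ℕ →₀ ℂ))
    (hU : U = Submodule.span ℂ
      ({v | ∃ j ∈ S, v = Finsupp.single j (1 : ℂ)} ∪
       {v | ∃ j ∈ S, v = g (Finsupp.single j (1 : ℂ))})) :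
    FiniteDimensional ℂ U ∧
    Submodule.map (g : (ℕ →₀ ℂ) →ₗ[ℂ] (ℕ →₀ ℂ)) U = U ∧
    U ⊔ Submodule.span ℂ {v | ∃ i ∉ S, v = Finsupp.single i (1 : ℂ)} = ⊤ := by
  have hA : ∀ j ∈ S, Finsupp.single j (1:ℂ) ∈ U := fun j hj => by
    rw [hU]; exact Submodule.subset_span (Or.inl ⟨j, hj, rfl⟩)
  have hB : ∀ j ∈ S, g (Finsupp.single j (1:ℂ)) ∈ U := fun j hj => by
    rw [hU]; exact Submodule.subset_span (Or.inr ⟨j, hj, rfl⟩)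
  have key : ∀ v : ℕ →₀ ℂ, g v - v ∈ U := by
    intro v
    induction v using Finsupp.induction_linear with
    | zero => simp
    | add f h hf hh =>
        have := U.add_mem hf hh
        simpa [map_add, add_sub_add_comm] using this
    | single a b =>
        have hsm : Finsupp.single a b = b • Finsupp.single a (1:ℂ) := by
          simp [Finsupp.smul_single]
        by_cases ha : a ∈ S
        · rw [hsm, map_smul, ← smul_sub]
          exact U.smul_mem b (U.sub_mem (hB a ha) (hA a ha))
        · rw [hsm, map_smul, hg a ha, sub_self]
          exact U.zero_mem
  have hfin : ({v | ∃ j ∈ S, v = Finsupp.single j (1 : ℂ)} ∪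
       {v | ∃ j ∈ S, v = g (Finsupp.single j (1 : ℂ))} : Set (ℕ →₀ ℂ)).Finite := by
    apply Set.Finite.union
    · have : {v | ∃ j ∈ S, v = Finsupp.single j (1 : ℂ)} =
        (fun j => Finsupp.single j (1:ℂ)) '' (S : Set ℕ) := by
        ext v; simp [eq_comm]
      rw [this]; exact (S.finite_toSet.image _)
    · have : {v | ∃ j ∈ S, v = g (Finsupp.single j (1 : ℂ))} =
        (fun j => g (Finsupp.single j (1:ℂ))) '' (S : Set ℕ) := by
        ext v; simp [eq_comm]
      rw [this]; exact (S.finite_toSet.image _)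
  have hFD : FiniteDimensional ℂ U := by
    rw [hU]; exact FiniteDimensional.span_of_finite ℂ hfin
  have hle : Submodule.map (g : (ℕ →₀ ℂ) →ₗ[ℂ] (ℕ →₀ ℂ)) U ≤ U := by
    rintro x ⟨y, hy, rfl⟩
    rw [hU] at hy
    have hsub : ({v | ∃ j ∈ S, v = Finsupp.single j (1 : ℂ)} ∪
       {v | ∃ j ∈ S, v = g (Finsupp.single j (1 : ℂ))} : Set (ℕ →₀ ℂ)) ⊆
       (Submodule.comap (g : (ℕ →₀ ℂ) →ₗ[ℂ] (ℕ →₀ ℂ)) U : Set (ℕ →₀ ℂ)) := by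
      rintro v (⟨j, hj, rfl⟩ | ⟨j, hj, rfl⟩)
      · exact hB j hj
      · show g (g (Finsupp.single j (1:ℂ))) ∈ U
        have := key (g (Finsupp.single j (1:ℂ)))
        have h2 := U.add_mem this (hB j hj)
        simpa using h2
    have := Submodule.span_le.mpr hsub
    exact this hy
  have hmap : Submodule.map (g : (ℕ →₀ ℂ) →ₗ[ℂ] (ℕ →₀ ℂ)) U = U := by
    apply Submodule.eq_of_le_of_finrank_le hle
    exact le_of_eq (LinearEquiv.finrank_map_eq g U).symm
  refine ⟨hFD, hmap, ?_⟩
  rw [eq_top_iff]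
  rintro x -
  induction x using Finsupp.induction_linear with
  | zero => exact Submodule.zero_mem _
  | add f h hf hh => exact Submodule.add_mem _ hf hh
  | single a b =>
      have hsm : Finsupp.single a b = b • Finsupp.single a (1:ℂ) := by
        simp [Finsupp.smul_single]
      rw [hsm]
      apply Submodule.smul_mem
      by_cases ha : a ∈ S
      · exact Submodule.mem_sup_left (hA a ha)
      · exact Submodule.mem_sup_right (Submodule.subset_span ⟨a, ha, rfl⟩)
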